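/- Under hypotheses (H1)–(H4), the function c satisfies: (1) a' < 0; (2) c(0) = g(0); (3) ∫_{a'}^{0} c(x)^{n−1} dx = |K ∩ H⁻|; (4) ∫_{0}^{b'} c(x)^{n−1} dx = |K ∩ H⁺|; (5) ∫_{a'}^{b'} c(x)^{n−1} dx = 1. -/

import Mathlib

open MeasureTheory Set

set_option maxHeartbeats 1000000

theorem properties_of_c (n : ℕ) (hn : 2 ≤ n)
    (K : Set (ℝ × EuclideanSpace ℝ (Fin (n - 1))))
    (hKcomp : IsCompact K) (hKconv : Convex ℝ K)
    -- (H1): the centroid of K is the origin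
    (hH1 : (∫ p in K, p) = 0)
    -- (H3): max_x |K_x| = 1
    (hH3le : ∀ x : ℝ, volume {y : EuclideanSpace ℝ (Fin (n - 1)) | (x, y) ∈ K} ≤ 1)
    (hH3eq : ∃ x : ℝ, volume {y : EuclideanSpace ℝ (Fin (n - 1)) | (x, y) ∈ K} = 1)
    -- (H4): |K| = 1
    (hH4 : volume K = 1)
    (a b : ℝ)
    (ha : IsLeast (Prod.fst '' K) a) (hb : IsGreatest (Prod.fst '' K) b)
    (g : ℝ → ℝ)
    (hg : ∀ x, g x = (volume {y : EuclideanSpace ℝ (Fin (n - 1)) | (x, y) ∈ K}).toReal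
              ^ (((n:ℝ) - 1)⁻¹))
    (a' b' : ℝ)
    (hb' : b' = ((n:ℝ) / (volume {y : EuclideanSpace ℝ (Fin (n - 1)) | ((0:ℝ), y) ∈ K}).toReal)
            * (volume (K ∩ {p : ℝ × EuclideanSpace ℝ (Fin (n - 1)) | 0 ≤ p.1})).toReal)
    (ha' : a' = b' - (((n:ℝ) * b' ^ (n - 1))
            / (volume {y : EuclideanSpace ℝ (Fin (n - 1)) | ((0:ℝ), y) ∈ K}).toReal)
              ^ ((n:ℝ)⁻¹))
    (c : ℝ → ℝ)
    (hc : ∀ x ∈ Icc a' b', c x = g 0 * (b' - x) / b') :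
    a' < 0 ∧
    c 0 = g 0 ∧
    (∫ x in a'..0, c x ^ (n - 1)) =
      (volume (K ∩ {p : ℝ × EuclideanSpace ℝ (Fin (n - 1)) | p.1 ≤ 0})).toReal ∧
    (∫ x in (0:ℝ)..b', c x ^ (n - 1)) =
      (volume (K ∩ {p : ℝ × EuclideanSpace ℝ (Fin (n - 1)) | 0 ≤ p.1})).toReal ∧
    (∫ x in a'..b', c x ^ (n - 1)) = 1 := by
  have hmK : MeasurableSet K := hKcomp.isClosed.measurableSet
  have hnR : (0:ℝ) < n := by positivity
  have hnne : (n:ℝ) ≠ 0 := hnR.ne'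
  have hnn : n - 1 + 1 = n := by omega
  have hm : ((n - 1 : ℕ) : ℝ) = (n:ℝ) - 1 := by
    have : (1:ℕ) ≤ n := by omega
    push_cast [this]; ring
  have hn1 : (n:ℝ) - 1 ≠ 0 := by
    have : (2:ℝ) ≤ (n:ℝ) := by exact_mod_cast hn
    linarith
  set Qp := volume (K ∩ {p : ℝ × EuclideanSpace ℝ (Fin (n - 1)) | 0 ≤ p.1}) with hQpdef
  set Qm := volume (K ∩ {p : ℝ × EuclideanSpace ℝ (Fin (n - 1)) | p.1 ≤ 0}) with hQmdef
  have hmp : MeasurableSet {p : ℝ × EuclideanSpace ℝ (Fin (n - 1)) | 0 ≤ p.1} :=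
    measurableSet_le measurable_const measurable_fst
  have hmm : MeasurableSet {p : ℝ × EuclideanSpace ℝ (Fin (n - 1)) | p.1 ≤ 0} :=
    measurableSet_le measurable_fst measurable_const
  have hQple : Qp ≤ 1 := by rw [hQpdef, ← hH4]; exact measure_mono inter_subset_left
  have hQmle : Qm ≤ 1 := by rw [hQmdef, ← hH4]; exact measure_mono inter_subset_left
  have hQpt : Qp ≠ ⊤ := (lt_of_le_of_lt hQple ENNReal.one_lt_top).ne
  have hQmt : Qm ≠ ⊤ := (lt_of_le_of_lt hQmle ENNReal.one_lt_top).ne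
  have hzero : volume (K ∩ {p : ℝ × EuclideanSpace ℝ (Fin (n - 1)) | p.1 = 0}) = 0 := by
    refine measure_mono_null (fun p hp => ?_)
      (show volume ({(0:ℝ)} ×ˢ (univ : Set (EuclideanSpace ℝ (Fin (n-1))))) = 0 from ?_)
    · exact ⟨hp.2, mem_univ _⟩
    · rw [Measure.volume_eq_prod, Measure.prod_prod]; simp
  have hsum : Qp + Qm = 1 := by
    have h := measure_union_add_inter (μ := volume)
      (K ∩ {p : ℝ × EuclideanSpace ℝ (Fin (n - 1)) | 0 ≤ p.1}) (hmK.inter hmm)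
    have hU : (K ∩ {p : ℝ × EuclideanSpace ℝ (Fin (n-1)) | 0 ≤ p.1}) ∪
        (K ∩ {p : ℝ × EuclideanSpace ℝ (Fin (n-1)) | p.1 ≤ 0}) = K := by
      ext p; constructor
      · rintro (h | h) <;> exact h.1
      · intro hp
        rcases le_total 0 p.1 with h' | h'
        · exact Or.inl ⟨hp, h'⟩
        · exact Or.inr ⟨hp, h'⟩
    have hI : (K ∩ {p : ℝ × EuclideanSpace ℝ (Fin (n-1)) | 0 ≤ p.1}) ∩
        (K ∩ {p : ℝ × EuclideanSpace ℝ (Fin (n-1)) | p.1 ≤ 0}) =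
        K ∩ {p : ℝ × EuclideanSpace ℝ (Fin (n-1)) | p.1 = 0} := by
      ext p
      simp only [mem_inter_iff, mem_setOf_eq]
      constructor
      · rintro ⟨⟨hK1, h1⟩, _, h2⟩; exact ⟨hK1, le_antisymm h2 h1⟩
      · rintro ⟨hK1, h'⟩; exact ⟨⟨hK1, h'.ge⟩, hK1, h'.le⟩
    rw [hU, hI, hH4, hzero, add_zero] at h
    exact h.symm
  have hfstint : IntegrableOn (fun p : ℝ × EuclideanSpace ℝ (Fin (n-1)) => p.1) K volume :=
    continuous_fst.continuousOn.integrableOn_compact hKcomp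
  have hidint : IntegrableOn (fun p : ℝ × EuclideanSpace ℝ (Fin (n-1)) => p) K volume :=
    continuous_id.continuousOn.integrableOn_compact hKcomp
  have hcent : (∫ p in K, p.1) = 0 := by
    have h := (ContinuousLinearMap.fst ℝ ℝ (EuclideanSpace ℝ (Fin (n-1)))).integral_comp_comm hidint
    rw [hH1] at h
    simpa using h
  -- if p.1 = 0 a.e. on K, contradiction
  have contra : ¬ (∀ᵐ p ∂(volume.restrict K), (p : ℝ × EuclideanSpace ℝ (Fin (n-1))).1 = 0) := by
    intro h2
    have h0 : volume (K ∩ {p : ℝ × EuclideanSpace ℝ (Fin (n-1)) | p.1 ≠ 0}) = 0 := by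
      rw [ae_restrict_iff' hmK, ae_iff] at h2
      refine measure_mono_null ?_ h2
      rintro p ⟨hpK, hp0⟩
      exact fun himp => hp0 (himp hpK)
    have hK0 : volume K = 0 := by
      refine le_antisymm ?_ zero_le
      have hsplit : K ⊆ (K ∩ {p : ℝ × EuclideanSpace ℝ (Fin (n-1)) | p.1 ≠ 0}) ∪
          (K ∩ {p : ℝ × EuclideanSpace ℝ (Fin (n-1)) | p.1 = 0}) := by
        intro p hp
        by_cases h' : p.1 = 0
        · exact Or.inr ⟨hp, h'⟩
        · exact Or.inl ⟨hp, h'⟩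
      calc volume K ≤ _ := measure_mono hsplit
        _ ≤ volume (K ∩ {p : ℝ × EuclideanSpace ℝ (Fin (n-1)) | p.1 ≠ 0}) +
            volume (K ∩ {p : ℝ × EuclideanSpace ℝ (Fin (n-1)) | p.1 = 0}) := measure_union_le _ _
        _ = 0 := by rw [h0, hzero, add_zero]
    rw [hH4] at hK0; exact one_ne_zero hK0
  have hQmne : Qm ≠ 0 := by
    intro hq
    apply contra
    have hae : ∀ᵐ p ∂(volume.restrict K),
        0 ≤ (fun q : ℝ × EuclideanSpace ℝ (Fin (n-1)) => q.1) p := by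
      rw [ae_restrict_iff' hmK, ae_iff]
      refine measure_mono_null ?_ hq
      rintro p hp
      simp only [mem_setOf_eq, Classical.not_imp, not_le] at hp
      exact ⟨hp.1, hp.2.le⟩
    have h := (integral_eq_zero_iff_of_nonneg_ae hae hfstint).mp hcent
    filter_upwards [h] with p hp using hp
  have hQpne : Qp ≠ 0 := by
    intro hq
    apply contra
    have hcentneg : (∫ p in K, -(p : ℝ × EuclideanSpace ℝ (Fin (n-1))).1) = 0 := by
      rw [integral_neg, hcent, neg_zero]
    have hae : ∀ᵐ p ∂(volume.restrict K),
        0 ≤ (fun q : ℝ × EuclideanSpace ℝ (Fin (n-1)) => -q.1) p := by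
      rw [ae_restrict_iff' hmK, ae_iff]
      refine measure_mono_null ?_ hq
      rintro p hp
      simp only [mem_setOf_eq, Classical.not_imp, not_le, neg_nonneg, not_lt] at hp
      exact ⟨hp.1, hp.2.le⟩
    have h := (integral_eq_zero_iff_of_nonneg_ae hae hfstint.neg).mp hcentneg
    filter_upwards [h] with p hp using by
      have : -(p.1) = 0 := hp
      linarith
  -- existence of slices of positive measure
  have exists_slice : ∀ S : Set ℝ, MeasurableSet S →
      volume (K ∩ {p : ℝ × EuclideanSpace ℝ (Fin (n-1)) | p.1 ∈ S}) ≠ 0 →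
      ∃ x ∈ S, volume {y : EuclideanSpace ℝ (Fin (n-1)) | (x, y) ∈ K} ≠ 0 := by
    intro S hS hpos
    by_contra hcon
    push_neg at hcon
    apply hpos
    have hms : MeasurableSet (K ∩ {p : ℝ × EuclideanSpace ℝ (Fin (n-1)) | p.1 ∈ S}) :=
      hmK.inter (hS.preimage measurable_fst)
    rw [Measure.volume_eq_prod, Measure.prod_apply hms]
    have hx : ∀ x : ℝ,
        volume (Prod.mk x ⁻¹' (K ∩ {p : ℝ × EuclideanSpace ℝ (Fin (n-1)) | p.1 ∈ S})) = 0 := by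
      intro x
      by_cases hxS : x ∈ S
      · refine measure_mono_null ?_ (hcon x hxS)
        rintro y ⟨hy, _⟩; exact hy
      · have he : Prod.mk x ⁻¹' (K ∩ {p : ℝ × EuclideanSpace ℝ (Fin (n-1)) | p.1 ∈ S}) = ∅ := by
          ext y
          simp only [mem_preimage, mem_inter_iff, mem_setOf_eq, mem_empty_iff_false, iff_false]
          rintro ⟨_, hyS⟩; exact hxS hyS
        rw [he, measure_empty]
    simp only [hx, lintegral_zero]
  obtain ⟨xp, hxp0, hfxp⟩ := exists_slice (Ici 0) measurableSet_Ici (by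
    simpa only [mem_Ici] using hQpne)
  obtain ⟨xm, hxm0, hfxm⟩ := exists_slice (Iic 0) measurableSet_Iic (by
    simpa only [mem_Iic] using hQmne)
  rw [mem_Ici] at hxp0
  rw [mem_Iic] at hxm0
  -- the central slice has positive measure
  have hf0 : volume {y : EuclideanSpace ℝ (Fin (n-1)) | ((0:ℝ), y) ∈ K} ≠ 0 := by
    rcases eq_or_lt_of_le hxp0 with h | hxpp
    · rw [← h] at hfxp; exact hfxp
    rcases eq_or_lt_of_le hxm0 with h | hxmn
    · rw [h] at hfxm; exact hfxm
    set lam := xp / (xp - xm) with hlam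
    have hd : (0:ℝ) < xp - xm := by linarith
    have hl0 : 0 < lam := div_pos hxpp hd
    have hl1 : lam < 1 := (div_lt_one hd).mpr (by linarith)
    obtain ⟨ym, hym⟩ := nonempty_of_measure_ne_zero hfxm
    have hsub : (AffineMap.homothety ym (1 - lam)) ''
        {y : EuclideanSpace ℝ (Fin (n-1)) | (xp, y) ∈ K} ⊆
        {y : EuclideanSpace ℝ (Fin (n-1)) | ((0:ℝ), y) ∈ K} := by
      rintro z ⟨y, hy, rfl⟩
      have hmem : lam • ((xm, ym) : ℝ × EuclideanSpace ℝ (Fin (n-1))) + (1 - lam) • (xp, y) ∈ K :=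
        hKconv hym hy hl0.le (by linarith) (by ring)
      have heq : lam • ((xm, ym) : ℝ × EuclideanSpace ℝ (Fin (n-1))) + (1 - lam) • (xp, y)
          = ((0:ℝ), AffineMap.homothety ym (1 - lam) y) := by
        simp only [Prod.smul_mk, Prod.mk_add_mk, Prod.mk.injEq, smul_eq_mul]
        constructor
        · rw [hlam]; field_simp; ring
        · simp only [AffineMap.homothety_apply, vsub_eq_sub, vadd_eq_add, smul_sub]
          module
      rw [heq] at hmem
      exact hmem
    intro h0
    have hle := measure_mono (μ := (volume : Measure (EuclideanSpace ℝ (Fin (n-1))))) hsub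
    rw [Measure.addHaar_image_homothety, h0, le_zero_iff, mul_eq_zero] at hle
    rcases hle with h | h
    · rw [ENNReal.ofReal_eq_zero] at h
      have h1l : (0:ℝ) < 1 - lam := by linarith
      have : (0:ℝ) < |(1 - lam) ^ Module.finrank ℝ (EuclideanSpace ℝ (Fin (n-1)))| :=
        abs_pos.mpr (pow_ne_zero _ h1l.ne')
      linarith
    · exact hfxp h
  -- real quantities
  set V0 := (volume {y : EuclideanSpace ℝ (Fin (n-1)) | ((0:ℝ), y) ∈ K}).toReal with hV0def
  set Vp := Qp.toReal with hVpdef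
  set Vm := Qm.toReal with hVmdef
  have hV0pos : 0 < V0 :=
    ENNReal.toReal_pos hf0 (lt_of_le_of_lt (hH3le 0) ENNReal.one_lt_top).ne
  have hVppos : 0 < Vp := ENNReal.toReal_pos hQpne hQpt
  have hVmpos : 0 < Vm := ENNReal.toReal_pos hQmne hQmt
  have hVsum : Vp + Vm = 1 := by
    have h := congrArg ENNReal.toReal hsum
    rwa [ENNReal.toReal_add hQpt hQmt, ENNReal.toReal_one] at h
  have hVplt : Vp < 1 := by linarith
  have hg0 : g 0 ^ (n - 1) = V0 := by
    rw [hg 0, ← Real.rpow_natCast (V0 ^ (((n:ℝ) - 1)⁻¹)) (n-1), ← Real.rpow_mul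
      ENNReal.toReal_nonneg, hm, inv_mul_cancel₀ hn1, Real.rpow_one]
  have hb'pos : 0 < b' := by
    rw [hb']
    exact mul_pos (div_pos hnR hV0pos) hVppos
  have hVp : Vp = V0 * b' / n := by
    rw [hb']; field_simp
  have hpow : b' ^ n = b' ^ (n-1) * b' := by rw [← pow_succ, hnn]
  have hQQpos : (0:ℝ) < (n:ℝ) * b' ^ (n-1) / V0 :=
    div_pos (by positivity) hV0pos
  have hba : b' - a' = ((n:ℝ) * b' ^ (n-1) / V0) ^ ((n:ℝ)⁻¹) := by
    rw [ha']; ring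
  have hban : (b' - a') ^ n = (n:ℝ) * b' ^ (n-1) / V0 := by
    rw [hba, ← Real.rpow_natCast (((n:ℝ) * b' ^ (n-1) / V0) ^ ((n:ℝ)⁻¹)) n,
      ← Real.rpow_mul hQQpos.le, inv_mul_cancel₀ hnne, Real.rpow_one]
  have hblt : b' < (n:ℝ) / V0 := by
    rw [hb']
    nlinarith [div_pos hnR hV0pos]
  have ha'neg : a' < 0 := by
    have h1 : b' ^ n < (n:ℝ) * b' ^ (n-1) / V0 := by
      calc b' ^ n = b' ^ (n-1) * b' := hpow
        _ < b' ^ (n-1) * ((n:ℝ) / V0) := by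
          exact mul_lt_mul_of_pos_left hblt (pow_pos hb'pos _)
        _ = (n:ℝ) * b' ^ (n-1) / V0 := by ring
    have h2 : b' < b' - a' := by
      calc b' = (b' ^ n) ^ ((n:ℝ)⁻¹) := by
            rw [← Real.rpow_natCast b' n, ← Real.rpow_mul hb'pos.le,
              mul_inv_cancel₀ hnne, Real.rpow_one]
        _ < ((n:ℝ) * b' ^ (n-1) / V0) ^ ((n:ℝ)⁻¹) :=
            Real.rpow_lt_rpow (by positivity) h1 (by positivity)
        _ = b' - a' := hba.symm
    linarith
  -- interval integral computation
  have key : ∀ u v : ℝ, (∫ x in u..v, (g 0 * (b' - x) / b') ^ (n-1))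
      = (V0 / b' ^ (n-1)) * (((b' - u) ^ n - (b' - v) ^ n) / n) := by
    intro u v
    have e1 : (fun x : ℝ => (g 0 * (b' - x) / b') ^ (n-1))
        = fun x : ℝ => (g 0 / b') ^ (n-1) * (b' - x) ^ (n-1) := by
      funext x; rw [mul_div_right_comm, mul_pow]
    rw [e1, intervalIntegral.integral_const_mul,
      intervalIntegral.integral_comp_sub_left (fun x => x ^ (n-1)) b',
      integral_pow, div_pow, hg0, hnn]
    have hcast : ((n - 1 : ℕ) : ℝ) + 1 = (n:ℝ) := by rw [hm]; ring
    rw [hcast]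
  have hIcc : ∀ u v : ℝ, a' ≤ u → v ≤ b' → u ≤ v →
      (∫ x in u..v, c x ^ (n-1)) = ∫ x in u..v, (g 0 * (b' - x) / b') ^ (n-1) := by
    intro u v h1 h2 h3
    apply intervalIntegral.integral_congr
    intro x hx
    rw [uIcc_of_le h3] at hx
    have hxI : x ∈ Icc a' b' := ⟨le_trans h1 hx.1, le_trans hx.2 h2⟩
    simp only [hc x hxI]
  have hb'ne : b' ≠ 0 := hb'pos.ne'
  have hbpne : b' ^ (n-1) ≠ 0 := pow_ne_zero _ hb'ne
  have hc0 : c 0 = g 0 := by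
    rw [hc 0 ⟨ha'neg.le, hb'pos.le⟩, sub_zero, mul_div_assoc, div_self hb'ne, mul_one]
  have hI4 : (∫ x in (0:ℝ)..b', c x ^ (n-1)) = Vp := by
    rw [hIcc 0 b' ha'neg.le le_rfl hb'pos.le, key 0 b', sub_self, sub_zero,
      zero_pow (by omega : n ≠ 0), sub_zero, hpow, hVp]
    field_simp
  have hI5 : (∫ x in a'..b', c x ^ (n-1)) = 1 := by
    rw [hIcc a' b' le_rfl le_rfl (by linarith), key a' b', sub_self,
      zero_pow (by omega : n ≠ 0), sub_zero, hban]
    field_simp [hbpne, hV0pos.ne', hnne]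
  have hI3 : (∫ x in a'..0, c x ^ (n-1)) = Vm := by
    rw [hIcc a' 0 le_rfl hb'pos.le ha'neg.le, key a' 0, sub_zero, hban, hpow]
    have hVm : Vm = 1 - Vp := by linarith
    rw [hVm, hVp]
    field_simp [hbpne, hV0pos.ne', hnne]
  exact ⟨ha'neg, hc0, hI3, hI4, hI5⟩
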